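/- Let G be a finite group, K a field, and α̂ ∈ K[G] with α̂(id) = 2 and α̂(g) = α̂(g⁻¹). Define T̂_g(v) = v − v(g)·(α̂ · ê_g) on K[G]. If g, h ∈ G are distinct and α̂(gh⁻¹) = 0, then T̂_g and T̂_h commute. -/

import Mathlib

/-- If `g ≠ h` and the structure constant `α(g h⁻¹)` vanishes, the sheet-transition
generators `T̂_g` and `T̂_h` commute. -/
theorem sheet_transitions_commute (G : Type*) [Group G] [Fintype G] [DecidableEq G]
    (K : Type*) [Field K] (α : MonoidAlgebra K G) (hid : α.coeff 1 = 2)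
    (hsym : ∀ g : G, α.coeff g = α.coeff g⁻¹) (g h : G) (hgh : g ≠ h) (hzero : α.coeff (g * h⁻¹) = 0) :
    let T : G → MonoidAlgebra K G → MonoidAlgebra K G :=
      fun k v => v - v.coeff k • (α * MonoidAlgebra.single k 1)
    ∀ v, T g (T h v) = T h (T g v) := by
  intro T v
  have hzero' : α.coeff (h * g⁻¹) = 0 := by
    rw [hsym, mul_inv_rev, inv_inv]; exact hzero
  have e1 : ((v - v.coeff h • (α * MonoidAlgebra.single h 1) : MonoidAlgebra K G)).coeff g = v.coeff g := by
    rw [MonoidAlgebra.coeff_sub, Finsupp.sub_apply, MonoidAlgebra.coeff_smul_apply, MonoidAlgebra.coeff_mul_single_apply, hzero, zero_mul, smul_zero, sub_zero]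
  have e2 : ((v - v.coeff g • (α * MonoidAlgebra.single g 1) : MonoidAlgebra K G)).coeff h = v.coeff h := by
    rw [MonoidAlgebra.coeff_sub, Finsupp.sub_apply, MonoidAlgebra.coeff_smul_apply, MonoidAlgebra.coeff_mul_single_apply, hzero', zero_mul, smul_zero, sub_zero]
  show (v - v.coeff h • _) - (v - v.coeff h • _).coeff g • _ = (v - v.coeff g • _) - (v - v.coeff g • _).coeff h • _
  rw [e1, e2, sub_sub, sub_sub, add_comm]
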